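/- Let z_1,…,z_n ∈ [0,1)^{s+1} with z_i = (v_i, u_i), v_i ∈ [0,1), u_i ∈ [0,1)^s, and let D_n^* denote the star discrepancy of z_1,…,z_n in [0,1)^{s+1}. Fix 0 ≤ B_{ℓ−1} < B_ℓ ≤ 1 with β_ℓ = B_ℓ − B_{ℓ−1}, and let n_ℓ = #{i : B_{ℓ−1} ≤ v_i < B_ℓ} > 0. Then for every c ∈ [0,1)^s, the within-stratum local discrepancy satisfies |(1/n_ℓ) Σ_{i=1}^n 1{B_{ℓ−1} ≤ v_i < B_ℓ} · 1{u_i ∈ [0,c)} − vol([0,c))| ≤ |nβ_ℓ/n_ℓ − 1| · vol([0,c)) + (2n/n_ℓ) · D_n^*. -/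

import Mathlib

open scoped Classical

theorem within_stratum_local_discrepancy_bound
    (n s : ℕ) (hn : 1 ≤ n)
    (v : Fin n → ℝ) (u : Fin n → Fin s → ℝ)
    (hv : ∀ i, 0 ≤ v i ∧ v i < 1)
    (hu : ∀ i j, 0 ≤ u i j ∧ u i j < 1)
    (Bprev Bcur : ℝ) (hB0 : 0 ≤ Bprev) (hBlt : Bprev < Bcur) (hB1 : Bcur ≤ 1)
    (c : Fin s → ℝ) (hc : ∀ j, 0 ≤ c j ∧ c j < 1) :
    -- local discrepancy of the full (s+1)-dimensional points at anchored box [0,b)×[0,c')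
    let δ : ℝ → (Fin s → ℝ) → ℝ := fun b c' =>
      (1 / n) * ∑ i : Fin n,
          (if 0 ≤ v i ∧ v i < b then (1 : ℝ) else 0) *
          (if ∀ j, 0 ≤ u i j ∧ u i j < c' j then (1 : ℝ) else 0)
        - b * ∏ j, c' j
    -- the star discrepancy of the n points in [0,1)^{s+1}
    let Dstar : ℝ := sSup { y : ℝ | ∃ b : ℝ, ∃ c' : Fin s → ℝ,
        (0 ≤ b ∧ b < 1) ∧ (∀ j, 0 ≤ c' j ∧ c' j < 1) ∧ y = |δ b c'| }
    let β : ℝ := Bcur - Bprev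
    let nℓ : ℕ := (Finset.univ.filter (fun i : Fin n => Bprev ≤ v i ∧ v i < Bcur)).card
    nℓ > 0 →
      |(1 / nℓ) * ∑ i : Fin n,
            (if Bprev ≤ v i ∧ v i < Bcur then (1 : ℝ) else 0) *
            (if ∀ j, 0 ≤ u i j ∧ u i j < c j then (1 : ℝ) else 0)
          - ∏ j, c j|
        ≤ |(n : ℝ) * β / nℓ - 1| * ∏ j, c j + (2 * n / nℓ) * Dstar := by
  intro δ Dstar β nℓ hpos
  have hN : (0:ℝ) < (n:ℝ) := by exact_mod_cast hn
  have hL : (0:ℝ) < (nℓ:ℝ) := by exact_mod_cast hpos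
  have hδdef : ∀ (b : ℝ) (c' : Fin s → ℝ), δ b c' =
      (1 / n) * ∑ i : Fin n,
          (if 0 ≤ v i ∧ v i < b then (1 : ℝ) else 0) *
          (if ∀ j, 0 ≤ u i j ∧ u i j < c' j then (1 : ℝ) else 0)
        - b * ∏ j, c' j := fun _ _ => rfl
  have hβ : β = Bcur - Bprev := rfl
  have hP0 : (0:ℝ) ≤ ∏ j, c j := Finset.prod_nonneg fun j _ => (hc j).1
  have hP1 : (∏ j, c j) ≤ 1 :=
    Finset.prod_le_one (fun j _ => (hc j).1) (fun j _ => (hc j).2.le)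
  -- a crude bound on |δ b c'|
  have hδbound : ∀ (b : ℝ) (c' : Fin s → ℝ), 0 ≤ b → b ≤ 1 →
      (∀ j, 0 ≤ c' j ∧ c' j < 1) → |δ b c'| ≤ 2 := by
    intro b c' hb0 hb1 hc'
    have hq0 : (0:ℝ) ≤ ∏ j, c' j := Finset.prod_nonneg fun j _ => (hc' j).1
    have hq1 : (∏ j, c' j) ≤ 1 :=
      Finset.prod_le_one (fun j _ => (hc' j).1) (fun j _ => (hc' j).2.le)
    have hsum0 : (0:ℝ) ≤ ∑ i : Fin n,
        (if 0 ≤ v i ∧ v i < b then (1 : ℝ) else 0) *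
        (if ∀ j, 0 ≤ u i j ∧ u i j < c' j then (1 : ℝ) else 0) :=
      Finset.sum_nonneg fun i _ =>
        mul_nonneg (by split_ifs <;> norm_num) (by split_ifs <;> norm_num)
    have hsum1 : (∑ i : Fin n,
        (if 0 ≤ v i ∧ v i < b then (1 : ℝ) else 0) *
        (if ∀ j, 0 ≤ u i j ∧ u i j < c' j then (1 : ℝ) else 0)) ≤ n := by
      calc (∑ i : Fin n,
          (if 0 ≤ v i ∧ v i < b then (1 : ℝ) else 0) *
          (if ∀ j, 0 ≤ u i j ∧ u i j < c' j then (1 : ℝ) else 0))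
          ≤ ∑ _i : Fin n, (1:ℝ) := by
            apply Finset.sum_le_sum
            intro i _
            have h1 : (if 0 ≤ v i ∧ v i < b then (1 : ℝ) else 0) ≤ 1 := by
              split_ifs <;> norm_num
            have h2 : (if ∀ j, 0 ≤ u i j ∧ u i j < c' j then (1 : ℝ) else 0) ≤ 1 := by
              split_ifs <;> norm_num
            have h3 : (0:ℝ) ≤ (if ∀ j, 0 ≤ u i j ∧ u i j < c' j then (1 : ℝ) else 0) := by
              split_ifs <;> norm_num
            calc _ ≤ 1 * (if ∀ j, 0 ≤ u i j ∧ u i j < c' j then (1 : ℝ) else 0) :=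
                  mul_le_mul_of_nonneg_right h1 h3
              _ ≤ 1 := by simpa using h2
        _ = n := by simp
    rw [hδdef]
    have hA : (0:ℝ) ≤ (1 / n) * ∑ i : Fin n,
        (if 0 ≤ v i ∧ v i < b then (1 : ℝ) else 0) *
        (if ∀ j, 0 ≤ u i j ∧ u i j < c' j then (1 : ℝ) else 0) := by positivity
    have hA1 : (1 / n) * (∑ i : Fin n,
        (if 0 ≤ v i ∧ v i < b then (1 : ℝ) else 0) *
        (if ∀ j, 0 ≤ u i j ∧ u i j < c' j then (1 : ℝ) else 0)) ≤ 1 := by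
      rw [div_mul_eq_mul_div, one_mul, div_le_one hN]; exact hsum1
    have hB0' : (0:ℝ) ≤ b * ∏ j, c' j := mul_nonneg hb0 hq0
    have hB1' : b * ∏ j, c' j ≤ 1 := by nlinarith
    rw [abs_le]; constructor <;> nlinarith
  have hbdd : BddAbove { y : ℝ | ∃ b : ℝ, ∃ c' : Fin s → ℝ,
      (0 ≤ b ∧ b < 1) ∧ (∀ j, 0 ≤ c' j ∧ c' j < 1) ∧ y = |δ b c'| } := by
    refine ⟨2, ?_⟩
    rintro y ⟨b, c', ⟨hb0, hb1⟩, hc', rfl⟩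
    exact hδbound b c' hb0 hb1.le hc'
  have hmemD : ∀ (b : ℝ), 0 ≤ b → b < 1 → |δ b c| ≤ Dstar := by
    intro b hb0 hb1
    exact le_csSup hbdd ⟨b, c, ⟨hb0, hb1⟩, hc, rfl⟩
  have hδprev : |δ Bprev c| ≤ Dstar := hmemD Bprev hB0 (lt_of_lt_of_le hBlt hB1)
  have hδcur : |δ Bcur c| ≤ Dstar := by
    rcases lt_or_eq_of_le hB1 with h | h
    · exact hmemD Bcur (le_trans hB0 hBlt.le) h
    · subst h
      apply le_of_forall_pos_le_add
      intro ε hε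
      have hne : (Finset.univ : Finset (Fin n)).Nonempty := ⟨⟨0, hn⟩, Finset.mem_univ _⟩
      set M := Finset.univ.sup' hne v with hM
      have hM0 : 0 ≤ M := le_trans (hv ⟨0, hn⟩).1 (Finset.le_sup' v (Finset.mem_univ _))
      have hM1 : M < 1 := (Finset.sup'_lt_iff hne).mpr fun i _ => (hv i).2
      set b := max ((1 + M) / 2) (1 - ε) with hb
      have hb1 : b < 1 := max_lt (by linarith) (by linarith)
      have hb0 : 0 ≤ b := le_trans (by linarith) (le_max_left _ _)
      have hbM : ∀ i, v i < b := fun i =>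
        lt_of_le_of_lt (Finset.le_sup' v (Finset.mem_univ i))
          (lt_of_lt_of_le (by linarith) (le_max_left _ _))
      have hsum : (∑ i : Fin n,
            (if 0 ≤ v i ∧ v i < (1:ℝ) then (1 : ℝ) else 0) *
            (if ∀ j, 0 ≤ u i j ∧ u i j < c j then (1 : ℝ) else 0))
          = ∑ i : Fin n,
            (if 0 ≤ v i ∧ v i < b then (1 : ℝ) else 0) *
            (if ∀ j, 0 ≤ u i j ∧ u i j < c j then (1 : ℝ) else 0) := by
        refine Finset.sum_congr rfl fun i _ => ?_
        have h1 : 0 ≤ v i ∧ v i < 1 := ⟨(hv i).1, (hv i).2⟩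
        have h2 : 0 ≤ v i ∧ v i < b := ⟨(hv i).1, hbM i⟩
        rw [if_pos h1, if_pos h2]
      have hdiff : δ 1 c = δ b c + (b - 1) * ∏ j, c j := by
        rw [hδdef, hδdef, hsum]; ring
      have hD := hmemD b hb0 hb1
      have hab : |(b - 1) * ∏ j, c j| ≤ ε := by
        rw [abs_mul, abs_of_nonneg hP0, abs_of_nonpos (by linarith : b - 1 ≤ 0)]
        have hbe : 1 - b ≤ ε := by
          have := le_max_right ((1 + M) / 2) (1 - ε)
          have : 1 - ε ≤ b := this
          linarith
        nlinarith
      calc |δ 1 c| ≤ |δ b c| + |(b - 1) * ∏ j, c j| := by rw [hdiff]; exact abs_add_le _ _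
        _ ≤ Dstar + ε := add_le_add hD hab
  -- algebraic identity
  have key : ∀ i : Fin n, (if Bprev ≤ v i ∧ v i < Bcur then (1:ℝ) else 0)
      = (if 0 ≤ v i ∧ v i < Bcur then (1:ℝ) else 0)
        - (if 0 ≤ v i ∧ v i < Bprev then (1:ℝ) else 0) := by
    intro i
    have h0 := (hv i).1
    by_cases h1 : v i < Bprev
    · have h2 : v i < Bcur := h1.trans hBlt
      rw [if_neg (by push_neg; intro h; linarith), if_pos ⟨h0, h2⟩, if_pos ⟨h0, h1⟩]
      norm_num
    · by_cases h2 : v i < Bcur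
      · rw [if_pos ⟨not_lt.mp h1, h2⟩, if_pos ⟨h0, h2⟩, if_neg (by tauto)]
        norm_num
      · rw [if_neg (by tauto), if_neg (by tauto), if_neg (by tauto)]
        norm_num
  have hSstr : (∑ i : Fin n,
        (if Bprev ≤ v i ∧ v i < Bcur then (1 : ℝ) else 0) *
        (if ∀ j, 0 ≤ u i j ∧ u i j < c j then (1 : ℝ) else 0))
      = (∑ i : Fin n,
        (if 0 ≤ v i ∧ v i < Bcur then (1 : ℝ) else 0) *
        (if ∀ j, 0 ≤ u i j ∧ u i j < c j then (1 : ℝ) else 0))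
      - (∑ i : Fin n,
        (if 0 ≤ v i ∧ v i < Bprev then (1 : ℝ) else 0) *
        (if ∀ j, 0 ≤ u i j ∧ u i j < c j then (1 : ℝ) else 0)) := by
    rw [← Finset.sum_sub_distrib]
    exact Finset.sum_congr rfl fun i _ => by rw [key i]; ring
  have hδeq : ∀ b : ℝ, (∑ i : Fin n,
        (if 0 ≤ v i ∧ v i < b then (1 : ℝ) else 0) *
        (if ∀ j, 0 ≤ u i j ∧ u i j < c j then (1 : ℝ) else 0))
      = n * δ b c + n * (b * ∏ j, c j) := by
    intro b
    rw [hδdef]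
    field_simp
    ring
  have hmain : (1 / (nℓ:ℝ)) * (∑ i : Fin n,
        (if Bprev ≤ v i ∧ v i < Bcur then (1 : ℝ) else 0) *
        (if ∀ j, 0 ≤ u i j ∧ u i j < c j then (1 : ℝ) else 0)) - ∏ j, c j
      = ((n:ℝ) / nℓ) * (δ Bcur c - δ Bprev c) + ((n:ℝ) * β / nℓ - 1) * ∏ j, c j := by
    rw [hSstr, hδeq Bcur, hδeq Bprev, hβ]
    have h1 : (nℓ:ℝ) ≠ 0 := hL.ne'
    generalize δ Bcur c = d1
    generalize δ Bprev c = d2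
    field_simp
    ring
  rw [hmain]
  have habs : |δ Bcur c - δ Bprev c| ≤ 2 * Dstar := by
    calc |δ Bcur c - δ Bprev c| ≤ |δ Bcur c| + |δ Bprev c| := abs_sub _ _
      _ ≤ 2 * Dstar := by linarith
  calc |((n:ℝ) / nℓ) * (δ Bcur c - δ Bprev c) + ((n:ℝ) * β / nℓ - 1) * ∏ j, c j|
      ≤ |((n:ℝ) / nℓ) * (δ Bcur c - δ Bprev c)| + |((n:ℝ) * β / nℓ - 1) * ∏ j, c j| :=
        abs_add_le _ _
    _ ≤ ((n:ℝ) / nℓ) * (2 * Dstar) + |(n:ℝ) * β / nℓ - 1| * ∏ j, c j := by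
        rw [abs_mul, abs_mul, abs_of_nonneg (div_nonneg hN.le hL.le : (0:ℝ) ≤ (n:ℝ)/nℓ),
          abs_of_nonneg hP0]
        have := mul_le_mul_of_nonneg_left habs (div_nonneg hN.le hL.le : (0:ℝ) ≤ (n:ℝ)/nℓ)
        linarith
    _ = |(n:ℝ) * β / nℓ - 1| * ∏ j, c j + (2 * n / nℓ) * Dstar := by ring
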